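/- Let U ∈ ℝ^{m₁×r} and V ∈ ℝ^{m₂×r} have orthonormal columns, and let G ⊆ [m₁]×[m₂] be b-sparse. Then for any A ∈ ℝ^{m₁×m₂}, ‖G(P_U A P_V)‖ ≤ ( √(I(U)I(V)) · r · b / √(m₁ m₂) ) · ‖A‖, where P_U = UU^⊤, P_V = VV^⊤, I(U) = (m₁/r)max_i‖e_i^⊤U‖₂², I(V) = (m₂/r)max_j‖e_j^⊤V‖₂². -/

import Mathlib

open scoped Matrix.Norms.L2Operator
open Matrix

/-- `restrict G M` is the matrix `M` with all entries outside the index set `G` set to zero. -/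
def Matrix.restrict {m₁ m₂ : ℕ} (G : Finset (Fin m₁ × Fin m₂))
    (M : Matrix (Fin m₁) (Fin m₂) ℝ) : Matrix (Fin m₁) (Fin m₂) ℝ :=
  fun i j => if (i, j) ∈ G then M i j else 0

/-- `G` is `b`-sparse: every row and every column contains at most `b` indices of `G`. -/
def Matrix.BSparse {m₁ m₂ : ℕ} (G : Finset (Fin m₁ × Fin m₂)) (b : ℕ) : Prop :=
  (∀ i : Fin m₁, (G.filter (fun q => q.1 = i)).card ≤ b) ∧
  (∀ j : Fin m₂, (G.filter (fun q => q.2 = j)).card ≤ b)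

/-- The incoherence constant `I(U) = (m/r) maxᵢ ‖eᵢᵀ U‖₂²` of a matrix `U ∈ ℝ^{m×r}`. -/
noncomputable def Matrix.incoh {m r : ℕ} (U : Matrix (Fin m) (Fin r) ℝ) : ℝ :=
  ((m : ℝ) / r) * ⨆ i : Fin m, ∑ k, (U i k) ^ 2

lemma l2_opNorm_le_of_mulVec {m n : ℕ} (C : Matrix (Fin m) (Fin n) ℝ) {K : ℝ} (hK : 0 ≤ K)
    (h : ∀ x : EuclideanSpace ℝ (Fin n),
      ‖(EuclideanSpace.equiv (Fin m) ℝ).symm (C *ᵥ x)‖ ≤ K * ‖x‖) : ‖C‖ ≤ K := by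
  rw [Matrix.l2_opNorm_def]
  exact ContinuousLinearMap.opNorm_le_bound _ hK h

lemma euclid_norm_eq {m : ℕ} (y : Fin m → ℝ) :
    ‖(EuclideanSpace.equiv (Fin m) ℝ).symm y‖ = Real.sqrt (∑ i, (y i) ^ 2) := by
  simp [EuclideanSpace.norm_eq, sq_abs]

lemma schur_bound {m₁ m₂ b : ℕ} (G : Finset (Fin m₁ × Fin m₂)) (hG : Matrix.BSparse G b)
    (C : Matrix (Fin m₁) (Fin m₂) ℝ) (hsupp : ∀ i j, (i, j) ∉ G → C i j = 0)
    {c : ℝ} (hc : 0 ≤ c) (hC : ∀ i j, |C i j| ≤ c) : ‖C‖ ≤ b * c := by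
  have hrow : ∀ i, ∑ j, |C i j| ≤ b * c := by
    intro i
    have hsub : ∑ j, |C i j| = ∑ j ∈ (G.filter (fun q => q.1 = i)).image Prod.snd, |C i j| := by
      symm
      apply Finset.sum_subset (Finset.subset_univ _)
      intro j _ hj
      rw [hsupp i j, abs_zero]
      intro hmem
      exact hj (Finset.mem_image.mpr ⟨(i, j), Finset.mem_filter.mpr ⟨hmem, rfl⟩, rfl⟩)
    rw [hsub]
    calc ∑ j ∈ (G.filter (fun q => q.1 = i)).image Prod.snd, |C i j|
        ≤ ∑ _j ∈ (G.filter (fun q => q.1 = i)).image Prod.snd, c :=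
          Finset.sum_le_sum (fun j _ => hC i j)
      _ = ((G.filter (fun q => q.1 = i)).image Prod.snd).card * c := by
          rw [Finset.sum_const, nsmul_eq_mul]
      _ ≤ b * c := by
          apply mul_le_mul_of_nonneg_right _ hc
          exact_mod_cast (Finset.card_image_le.trans (hG.1 i))
  have hcol : ∀ j, ∑ i, |C i j| ≤ b * c := by
    intro j
    have hsub : ∑ i, |C i j| = ∑ i ∈ (G.filter (fun q => q.2 = j)).image Prod.fst, |C i j| := by
      symm
      apply Finset.sum_subset (Finset.subset_univ _)
      intro i _ hi
      rw [hsupp i j, abs_zero]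
      intro hmem
      exact hi (Finset.mem_image.mpr ⟨(i, j), Finset.mem_filter.mpr ⟨hmem, rfl⟩, rfl⟩)
    rw [hsub]
    calc ∑ i ∈ (G.filter (fun q => q.2 = j)).image Prod.fst, |C i j|
        ≤ ∑ _i ∈ (G.filter (fun q => q.2 = j)).image Prod.fst, c :=
          Finset.sum_le_sum (fun i _ => hC i j)
      _ = ((G.filter (fun q => q.2 = j)).image Prod.fst).card * c := by
          rw [Finset.sum_const, nsmul_eq_mul]
      _ ≤ b * c := by
          apply mul_le_mul_of_nonneg_right _ hc
          exact_mod_cast (Finset.card_image_le.trans (hG.2 j))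
  apply l2_opNorm_le_of_mulVec _ (by positivity)
  intro x
  have hx : ‖x‖ = Real.sqrt (∑ j, (x j) ^ 2) := by
    rw [EuclideanSpace.norm_eq]
    congr 1
    exact Finset.sum_congr rfl (fun j _ => by rw [Real.norm_eq_abs, sq_abs])
  rw [euclid_norm_eq, hx]
  have key : ∀ i, ((C *ᵥ x) i) ^ 2 ≤ (b * c) * ∑ j, |C i j| * (x j) ^ 2 := by
    intro i
    have h0 : |(C *ᵥ x) i| ≤ ∑ j, |C i j * x j| := by
      simp only [Matrix.mulVec, dotProduct]
      exact Finset.abs_sum_le_sum_abs _ _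
    have h1 : ((C *ᵥ x) i) ^ 2 ≤ (∑ j, |C i j * x j|) ^ 2 := by
      rw [← sq_abs ((C *ᵥ x) i)]
      exact pow_le_pow_left₀ (abs_nonneg _) h0 2
    have h2 : (∑ j, |C i j * x j|) ^ 2 ≤ (∑ j, |C i j|) * (∑ j, |C i j| * (x j) ^ 2) := by
      have hcs := Finset.sum_mul_sq_le_sq_mul_sq Finset.univ (fun j => Real.sqrt |C i j|)
        (fun j => Real.sqrt |C i j| * |x j|)
      calc (∑ j, |C i j * x j|) ^ 2
          = (∑ j, Real.sqrt |C i j| * (Real.sqrt |C i j| * |x j|)) ^ 2 := by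
            congr 1
            exact Finset.sum_congr rfl (fun j _ => by
              rw [← mul_assoc, Real.mul_self_sqrt (abs_nonneg _), abs_mul])
        _ ≤ (∑ j, Real.sqrt |C i j| ^ 2) * (∑ j, (Real.sqrt |C i j| * |x j|) ^ 2) := hcs
        _ = (∑ j, |C i j|) * (∑ j, |C i j| * (x j) ^ 2) := by
            congr 1
            · exact Finset.sum_congr rfl (fun j _ => Real.sq_sqrt (abs_nonneg _))
            · exact Finset.sum_congr rfl (fun j _ => by
                rw [mul_pow, Real.sq_sqrt (abs_nonneg _), sq_abs])
    calc ((C *ᵥ x) i) ^ 2 ≤ (∑ j, |C i j|) * (∑ j, |C i j| * (x j) ^ 2) := h1.trans h2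
      _ ≤ (b * c) * ∑ j, |C i j| * (x j) ^ 2 := by
          apply mul_le_mul_of_nonneg_right (hrow i) (by positivity)
  have hS : ∑ i, ((C *ᵥ x) i) ^ 2 ≤ (b * c) ^ 2 * ∑ j, (x j) ^ 2 := by
    calc ∑ i, ((C *ᵥ x) i) ^ 2 ≤ ∑ i, (b * c) * ∑ j, |C i j| * (x j) ^ 2 :=
          Finset.sum_le_sum (fun i _ => key i)
      _ = (b * c) * ∑ j, (∑ i, |C i j|) * (x j) ^ 2 := by
          rw [← Finset.mul_sum, Finset.sum_comm]
          congr 1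
          exact Finset.sum_congr rfl (fun j _ => by rw [Finset.sum_mul])
      _ ≤ (b * c) * ∑ j, (b * c) * (x j) ^ 2 := by
          apply mul_le_mul_of_nonneg_left _ (by positivity)
          exact Finset.sum_le_sum (fun j _ =>
            mul_le_mul_of_nonneg_right (hcol j) (sq_nonneg _))
      _ = (b * c) ^ 2 * ∑ j, (x j) ^ 2 := by rw [← Finset.mul_sum]; ring
  calc Real.sqrt (∑ i, ((C *ᵥ x) i) ^ 2) ≤ Real.sqrt ((b * c) ^ 2 * ∑ j, (x j) ^ 2) :=
        Real.sqrt_le_sqrt hS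
    _ = (b * c) * Real.sqrt (∑ j, (x j) ^ 2) := by
        rw [Real.sqrt_mul (sq_nonneg _), Real.sqrt_sq (by positivity)]
    _ = _ := by push_cast; ring

lemma dot_le_sqrt {n : ℕ} (u w : Fin n → ℝ) :
    |∑ k, u k * w k| ≤ Real.sqrt (∑ k, (u k)^2) * Real.sqrt (∑ k, (w k)^2) := by
  rw [← Real.sqrt_mul (by positivity), ← Real.sqrt_sq (abs_nonneg _)]
  apply Real.sqrt_le_sqrt
  rw [sq_abs]
  exact Finset.sum_mul_sq_le_sq_mul_sq _ _ _

lemma norm_U_le_one {m r : ℕ} (U : Matrix (Fin m) (Fin r) ℝ) (hU : Uᵀ * U = 1) : ‖U‖ ≤ 1 := by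
  have h1 : ‖(1 : Matrix (Fin r) (Fin r) ℝ)‖ ≤ 1 := by
    apply l2_opNorm_le_of_mulVec _ zero_le_one
    intro x
    rw [Matrix.one_mulVec, one_mul]
    exact le_of_eq rfl
  have h2 : ‖U‖ * ‖U‖ ≤ 1 := by
    calc ‖U‖ * ‖U‖ = ‖Uᴴ * U‖ := (Matrix.l2_opNorm_conjTranspose_mul_self U).symm
      _ = ‖(1 : Matrix (Fin r) (Fin r) ℝ)‖ := by
          rw [Matrix.conjTranspose_eq_transpose_of_trivial, hU]
      _ ≤ 1 := h1
  nlinarith [norm_nonneg U]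

lemma incoh_nonneg {m r : ℕ} (hm : 0 < m) (U : Matrix (Fin m) (Fin r) ℝ) :
    0 ≤ Matrix.incoh U := by
  have h0 : (0:ℝ) ≤ ⨆ i : Fin m, ∑ k, (U i k) ^ 2 := by
    have i0 : Fin m := ⟨0, hm⟩
    exact le_trans (by positivity) (le_ciSup (Set.Finite.bddAbove (Set.finite_range _)) i0)
  exact mul_nonneg (by positivity) h0

lemma row_sq_le {m r : ℕ} (hm : 0 < m) (hr : 0 < r) (U : Matrix (Fin m) (Fin r) ℝ) (i : Fin m) :
    ∑ k, (U i k) ^ 2 ≤ Matrix.incoh U * r / m := by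
  have h1 : ∑ k, (U i k) ^ 2 ≤ ⨆ i : Fin m, ∑ k, (U i k) ^ 2 :=
    le_ciSup (f := fun i : Fin m => ∑ k, (U i k) ^ 2)
      (Set.Finite.bddAbove (Set.finite_range _)) i
  have h2 : Matrix.incoh U * r / m = ⨆ i : Fin m, ∑ k, (U i k) ^ 2 := by
    rw [Matrix.incoh]
    have hm' : (m:ℝ) ≠ 0 := Nat.cast_ne_zero.mpr hm.ne'
    have hr' : (r:ℝ) ≠ 0 := Nat.cast_ne_zero.mpr hr.ne'
    field_simp
  rw [h2]; exact h1

/-- If `U ∈ 𝕆_{m₁,r}` and `V ∈ 𝕆_{m₂,r}` have orthonormal columns and `G` is `b`-sparse,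
then for every `A`, `‖G(P_U A P_V)‖ ≤ (√(I(U)I(V))·r·b/√(m₁m₂)) ‖A‖`,
where `P_U = UUᵀ` and `P_V = VVᵀ`. -/
theorem restrict_two_sided_proj_l2OpNorm_le {m₁ m₂ r b : ℕ}
    (U : Matrix (Fin m₁) (Fin r) ℝ) (hU : Uᵀ * U = 1)
    (V : Matrix (Fin m₂) (Fin r) ℝ) (hV : Vᵀ * V = 1)
    (G : Finset (Fin m₁ × Fin m₂)) (hG : Matrix.BSparse G b)
    (A : Matrix (Fin m₁) (Fin m₂) ℝ) :
    ‖Matrix.restrict G (U * Uᵀ * A * (V * Vᵀ))‖ ≤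
      Real.sqrt (Matrix.incoh U * Matrix.incoh V) * r * b / Real.sqrt (m₁ * m₂) * ‖A‖ := by
  rcases Nat.eq_zero_or_pos r with hr | hr
  · subst hr
    have h0 : U * Uᵀ = 0 := by ext i j; simp [Matrix.mul_apply]
    have h0' : Matrix.restrict G (U * Uᵀ * A * (V * Vᵀ)) = 0 := by
      ext i j; simp [Matrix.restrict, h0]
    rw [h0', norm_zero]
    positivity
  rcases Nat.eq_zero_or_pos m₁ with h1 | h1
  · subst h1
    have h0' : Matrix.restrict G (U * Uᵀ * A * (V * Vᵀ)) = 0 := by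
      ext i j; exact i.elim0
    rw [h0', norm_zero]
    positivity
  rcases Nat.eq_zero_or_pos m₂ with h2 | h2
  · subst h2
    have h0' : Matrix.restrict G (U * Uᵀ * A * (V * Vᵀ)) = 0 := by
      ext i j; exact j.elim0
    rw [h0', norm_zero]
    positivity
  set M := Uᵀ * A * V with hM
  have hMnorm : ‖M‖ ≤ ‖A‖ := by
    have hUn : ‖Uᵀ‖ ≤ 1 := by
      rw [← Matrix.conjTranspose_eq_transpose_of_trivial, Matrix.l2_opNorm_conjTranspose]
      exact norm_U_le_one U hU
    have hVn : ‖V‖ ≤ 1 := norm_U_le_one V hV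
    calc ‖Uᵀ * A * V‖ ≤ ‖Uᵀ * A‖ * ‖V‖ := Matrix.l2_opNorm_mul _ _
      _ ≤ ‖Uᵀ‖ * ‖A‖ * ‖V‖ :=
          mul_le_mul_of_nonneg_right (Matrix.l2_opNorm_mul _ _) (norm_nonneg _)
      _ ≤ 1 * ‖A‖ * 1 := by
          apply mul_le_mul _ hVn (norm_nonneg _) (by positivity)
          exact mul_le_mul_of_nonneg_right hUn (norm_nonneg _)
      _ = ‖A‖ := by ring
  set c : ℝ := Real.sqrt (Matrix.incoh U * r / m₁) * (‖A‖ * Real.sqrt (Matrix.incoh V * r / m₂))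
    with hc
  have hB : U * Uᵀ * A * (V * Vᵀ) = U * M * Vᵀ := by
    rw [hM]; simp only [Matrix.mul_assoc]
  have hent : ∀ i j, |(U * Uᵀ * A * (V * Vᵀ)) i j| ≤ c := by
    intro i j
    rw [hB]
    have hrw : (U * M * Vᵀ) i j = ∑ k, U i k * (M *ᵥ (fun l => V j l)) k := by
      simp only [Matrix.mul_apply, Matrix.transpose_apply, Matrix.mulVec, dotProduct,
        Finset.sum_mul, Finset.mul_sum]
      rw [Finset.sum_comm]
      exact Finset.sum_congr rfl fun k _ => Finset.sum_congr rfl fun l _ => by ring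
    rw [hrw]
    calc |∑ k, U i k * (M *ᵥ (fun l => V j l)) k|
        ≤ Real.sqrt (∑ k, (U i k)^2) *
            Real.sqrt (∑ k, ((M *ᵥ (fun l => V j l)) k)^2) := dot_le_sqrt _ _
      _ ≤ Real.sqrt (Matrix.incoh U * r / m₁) * (‖M‖ * Real.sqrt (∑ l, (V j l)^2)) := by
          apply mul_le_mul (Real.sqrt_le_sqrt (row_sq_le h1 hr U i)) _
            (Real.sqrt_nonneg _) (Real.sqrt_nonneg _)
          calc Real.sqrt (∑ k, ((M *ᵥ (fun l => V j l)) k)^2)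
              = ‖(EuclideanSpace.equiv (Fin r) ℝ).symm (M *ᵥ (fun l => V j l))‖ :=
                (euclid_norm_eq _).symm
            _ ≤ ‖M‖ * ‖(EuclideanSpace.equiv (Fin r) ℝ).symm (fun l => V j l)‖ :=
                Matrix.l2_opNorm_mulVec M ((EuclideanSpace.equiv (Fin r) ℝ).symm (fun l => V j l))
            _ = ‖M‖ * Real.sqrt (∑ l, (V j l)^2) := by rw [euclid_norm_eq]
      _ ≤ Real.sqrt (Matrix.incoh U * r / m₁) *
            (‖A‖ * Real.sqrt (Matrix.incoh V * r / m₂)) := by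
          apply mul_le_mul_of_nonneg_left _ (Real.sqrt_nonneg _)
          apply mul_le_mul hMnorm (Real.sqrt_le_sqrt (row_sq_le h2 hr V j))
            (Real.sqrt_nonneg _) (norm_nonneg _)
  have hcn : 0 ≤ c := by positivity
  have hschur : ‖Matrix.restrict G (U * Uᵀ * A * (V * Vᵀ))‖ ≤ b * c := by
    apply schur_bound G hG _ _ hcn
    · intro i j
      by_cases h : (i, j) ∈ G
      · simpa [Matrix.restrict, h] using hent i j
      · simpa [Matrix.restrict, h] using hcn
    · intro i j h
      simp [Matrix.restrict, h]
  refine hschur.trans (le_of_eq ?_)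
  rw [hc]
  have hIU : 0 ≤ Matrix.incoh U := incoh_nonneg h1 U
  have hIV : 0 ≤ Matrix.incoh V := incoh_nonneg h2 V
  have key : Real.sqrt (Matrix.incoh U * r / m₁) * Real.sqrt (Matrix.incoh V * r / m₂)
      = Real.sqrt (Matrix.incoh U * Matrix.incoh V) * r / Real.sqrt (m₁ * m₂) := by
    rw [← Real.sqrt_mul (by positivity)]
    have : Matrix.incoh U * r / m₁ * (Matrix.incoh V * r / m₂)
        = Matrix.incoh U * Matrix.incoh V * ((r:ℝ)^2 / (m₁ * m₂)) := by
      ring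
    rw [this, Real.sqrt_mul (by positivity), Real.sqrt_div (by positivity),
      Real.sqrt_sq (by positivity)]
    ring
  calc (b:ℝ) * (Real.sqrt (Matrix.incoh U * r / m₁) * (‖A‖ * Real.sqrt (Matrix.incoh V * r / m₂)))
      = Real.sqrt (Matrix.incoh U * r / m₁) * Real.sqrt (Matrix.incoh V * r / m₂) * b * ‖A‖ := by
        ring
    _ = Real.sqrt (Matrix.incoh U * Matrix.incoh V) * r / Real.sqrt (m₁ * m₂) * b * ‖A‖ := by
        rw [key]
    _ = Real.sqrt (Matrix.incoh U * Matrix.incoh V) * r * b / Real.sqrt (m₁ * m₂) * ‖A‖ := by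
        ring
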